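/- Let u be a continuous complex-valued function on a locally compact Hausdorff space Y with sup norm ‖u‖ = 1 and let y₀ ∈ Y with |u(y₀)| = 1. Define ũ(y) = (conj(u(y₀))² u(y)² + conj(u(y₀)) u(y))/2. Then ũ(y₀) = 1, ‖ũ‖ = 1, and for every y ∈ Y, |ũ(y)| = 1 implies ũ(y) = 1; moreover {y : ũ(y)=1} = {y : u(y) = u(y₀)} ⊆ {y : |u(y)| = 1}. -/

import Mathlib

open scoped ZeroAtInfty

theorem stmt1 {Y : Type*} [TopologicalSpace Y] [LocallyCompactSpace Y] [T2Space Y]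
    (u : C₀(Y, ℂ)) (hu : ‖u‖ = 1) (y₀ : Y) (hy₀ : ‖u y₀‖ = 1)
    (ut : C₀(Y, ℂ))
    (hut : ∀ y, ut y =
      ((starRingEnd ℂ (u y₀)) ^ 2 * (u y) ^ 2 + (starRingEnd ℂ (u y₀)) * u y) / 2) :
    ut y₀ = 1 ∧ ‖ut‖ = 1 ∧ (∀ y, ‖ut y‖ = 1 → ut y = 1) ∧
      {y : Y | ut y = 1} = {y : Y | u y = u y₀} ∧
      {y : Y | u y = u y₀} ⊆ {y : Y | ‖u y‖ = 1} := by
  set c : ℂ := starRingEnd ℂ (u y₀) with hcdef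
  have hc : c * u y₀ = 1 := by
    have h1 : u y₀ * c = (Complex.normSq (u y₀) : ℂ) := Complex.mul_conj (u y₀)
    have h2 : Complex.normSq (u y₀) = 1 := by
      rw [← Complex.sq_norm] at *
      have : ‖u y₀‖ = 1 := hy₀
      rw [this]; norm_num
    rw [mul_comm, h1, h2]; norm_num
  have hcnorm : ‖c‖ = 1 := by
    simpa [hcdef] using hy₀
  have hle : ∀ y, ‖u y‖ ≤ 1 := by
    intro y
    have := BoundedContinuousFunction.norm_coe_le_norm u.toBCF y
    rwa [ZeroAtInftyContinuousMap.norm_toBCF_eq_norm, hu] at this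
  -- rewrite ut in terms of w = c * u y
  have hut' : ∀ y, ut y = ((c * u y) ^ 2 + c * u y) / 2 := by
    intro y; rw [hut y]; ring
  have hw : ∀ y, ‖c * u y‖ ≤ 1 := by
    intro y; rw [norm_mul, hcnorm, one_mul]; exact hle y
  have h1 : ut y₀ = 1 := by rw [hut' y₀, hc]; norm_num
  have hub : ∀ y, ‖ut y‖ ≤ 1 := by
    intro y
    rw [hut' y]
    have h := hw y
    have hA : ‖(c * u y) ^ 2‖ ≤ 1 := by
      rw [norm_pow]; nlinarith [norm_nonneg (c * u y)]
    have hB : ‖(c * u y) ^ 2 + c * u y‖ ≤ 2 :=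
      le_trans (norm_add_le _ _) (by linarith)
    rw [norm_div]
    have h2n : ‖(2:ℂ)‖ = 2 := by norm_num
    rw [h2n]; linarith
  have hnorm : ‖ut‖ = 1 := by
    apply le_antisymm
    · rw [← ZeroAtInftyContinuousMap.norm_toBCF_eq_norm]
      haveI : Nonempty Y := ⟨y₀⟩
      exact BoundedContinuousFunction.norm_le_of_nonempty.mpr hub
    · have := BoundedContinuousFunction.norm_coe_le_norm ut.toBCF y₀
      rw [ZeroAtInftyContinuousMap.norm_toBCF_eq_norm] at this
      calc (1 : ℝ) = ‖ut y₀‖ := by rw [h1]; simp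
        _ ≤ ‖ut‖ := this
  have key : ∀ y, ‖ut y‖ = 1 → ut y = 1 := by
    intro y hy
    set w := c * u y with hwdef
    have hwle : ‖w‖ ≤ 1 := hw y
    have heq : ‖w ^ 2 + w‖ = 2 := by
      have : ‖ut y‖ = ‖w ^ 2 + w‖ / 2 := by
        rw [hut' y, norm_div]; norm_num; rfl
      rw [this] at hy; linarith
    -- ‖w^2 + w‖ = ‖w‖ * ‖w + 1‖ ≤ ‖w+1‖ ≤ 2, equality forces ‖w‖ = 1 and ‖w+1‖ = 2
    have hfact : w ^ 2 + w = w * (w + 1) := by ring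
    have h2 : ‖w‖ * ‖w + 1‖ = 2 := by rw [← norm_mul, ← hfact, heq]
    have hw1le : ‖w + 1‖ ≤ 2 := by
      calc ‖w + 1‖ ≤ ‖w‖ + ‖(1:ℂ)‖ := norm_add_le _ _
        _ ≤ 1 + 1 := by rw [norm_one]; linarith
        _ = 2 := by norm_num
    have hwge : (1:ℝ) ≤ ‖w‖ := by nlinarith [h2, hw1le, hwle, norm_nonneg w, norm_nonneg (w+1)]
    have hwn : ‖w‖ = 1 := le_antisymm hwle hwge
    have hw1 : ‖w + 1‖ = 2 := by nlinarith
    -- ‖w+1‖² = ‖w‖² + 2 Re w + 1 = 4 ⇒ Re w = 1, with ‖w‖=1 ⇒ w = 1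
    have hre : w.re = 1 := by
      have e1 : Complex.normSq (w + 1) = 4 := by
        rw [← Complex.sq_norm]
        have : ‖w + 1‖ = 2 := hw1
        rw [this]; norm_num
      have e2 : Complex.normSq w = 1 := by
        rw [← Complex.sq_norm]
        have : ‖w‖ = 1 := hwn
        rw [this]; norm_num
      simp [Complex.normSq_apply] at e1 e2
      nlinarith
    have him : w.im = 0 := by
      have e2 : Complex.normSq w = 1 := by
        rw [← Complex.sq_norm]
        have : ‖w‖ = 1 := hwn
        rw [this]; norm_num
      simp [Complex.normSq_apply, hre] at e2
      nlinarith
    have hwone : w = 1 := Complex.ext (by simp [hre]) (by simp [him])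
    rw [hut' y, ← hwdef, hwone]; norm_num
  have hsets : {y : Y | ut y = 1} = {y : Y | u y = u y₀} := by
    ext y
    simp only [Set.mem_setOf_eq]
    constructor
    · intro hy
      have hweq : c * u y = 1 := by
        have h2 : (c * u y) ^ 2 + c * u y = 2 := by
          have := hut' y
          rw [hy] at this
          field_simp at this
          linear_combination -this
        have hfact : (c * u y - 1) * (c * u y + 2) = 0 := by linear_combination h2
        rcases mul_eq_zero.mp hfact with h | h
        · exact sub_eq_zero.mp h
        · exfalso
          have hneg : c * u y = -2 := by linear_combination h
          have hle2 := hw y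
          rw [hneg] at hle2
          norm_num at hle2
      -- c * u y = 1 = c * u y₀, c ≠ 0
      have hcne : c ≠ 0 := by
        intro h; rw [h, zero_mul] at hc; exact one_ne_zero hc.symm
      have := hweq.trans hc.symm
      exact mul_left_cancel₀ hcne this
    · intro hy
      rw [hut' y, hy, hc]; norm_num
  refine ⟨h1, hnorm, key, hsets, ?_⟩
  intro y hy
  simp only [Set.mem_setOf_eq] at hy ⊢
  rw [hy, hy₀]
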